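/- (Nash-Williams partition theorem, 2 colours) Let A ⊆ ℕ be infinite and let 𝓕 be a thin family of finite subsets of ℕ (no member is a proper initial segment of another, where finite sets are identified with their increasing enumerations). For any c : 𝓕 → {0,1} there exist i ∈ {0,1} and an infinite A' ⊆ A such that every element of 𝓕 that is a subset of A' is coloured i. -/

import Mathlib

/-- `S` is an initial segment of `T` (finite sets identified with increasing enumerations). -/
def InitSeg (S T : Finset ℕ) : Prop :=
  ∃ S2 : Finset ℕ, T = S ∪ S2 ∧ ∀ a ∈ S, ∀ b ∈ S2, a < b

/-- A family of finite sets is thin: no member is a proper initial segment of another. -/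
def ThinFam (F : Set (Finset ℕ)) : Prop :=
  ∀ S ∈ F, ∀ T ∈ F, InitSeg S T → S = T

namespace NWaux

/-- `t` is a (finite) initial segment of the set `Y`. -/
def ISeg (t : Finset ℕ) (Y : Set ℕ) : Prop :=
  ↑t ⊆ Y ∧ ∀ b ∈ Y, b ∉ t → ∀ a ∈ t, a < b

/-- `X` accepts `s` : every infinite `Z ⊆ X` lying above `s` is such that `s ∪ Z` has an
initial segment in `F` of colour `0`. -/
def Acc (F : Set (Finset ℕ)) (c : Finset ℕ → Fin 2) (X : Set ℕ) (s : Finset ℕ) : Prop :=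
  ∀ Z : Set ℕ, Z.Infinite → Z ⊆ X → (∀ b ∈ s, ∀ n ∈ Z, b < n) →
    ∃ t ∈ F, c t = 0 ∧ ISeg t (↑s ∪ Z)

/-- `X` rejects `s` : no infinite subset of `X` accepts `s`. -/
def Rej (F : Set (Finset ℕ)) (c : Finset ℕ → Fin 2) (X : Set ℕ) (s : Finset ℕ) : Prop :=
  ∀ C : Set ℕ, C ⊆ X → C.Infinite → ¬ Acc F c C s

variable {F : Set (Finset ℕ)} {c : Finset ℕ → Fin 2}

lemma inf_gt {X : Set ℕ} (hX : X.Infinite) (a : ℕ) : {x ∈ X | a < x}.Infinite := by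
  have h : {x ∈ X | a < x} = X \ {x | x ≤ a} := by
    ext x
    constructor
    · rintro ⟨h1, h2⟩; exact ⟨h1, by simp; omega⟩
    · rintro ⟨h1, h2⟩; simp at h2; exact ⟨h1, by omega⟩
  rw [h]
  exact hX.diff (Set.finite_le_nat a)

lemma acc_mono {X C : Set ℕ} {s : Finset ℕ} (hC : C ⊆ X) (h : Acc F c X s) : Acc F c C s :=
  fun Z hZ hZC hgt => h Z hZ (hZC.trans hC) hgt

lemma rej_mono {X C : Set ℕ} {s : Finset ℕ} (hC : C ⊆ X) (h : Rej F c X s) : Rej F c C s :=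
  fun B hB hBinf => h B (hB.trans hC) hBinf

lemma dec_exists (F : Set (Finset ℕ)) (c : Finset ℕ → Fin 2) {X : Set ℕ} (hX : X.Infinite)
    (s : Finset ℕ) : ∃ C, C ⊆ X ∧ C.Infinite ∧ (Acc F c C s ∨ Rej F c C s) := by
  by_cases h : Rej F c X s
  · exact ⟨X, subset_rfl, hX, Or.inr h⟩
  · simp only [Rej, not_forall] at h
    obtain ⟨C, hC, hCinf, hacc⟩ := h
    exact ⟨C, hC, hCinf, Or.inl (not_not.mp hacc)⟩

lemma multidec (F : Set (Finset ℕ)) (c : Finset ℕ → Fin 2) {X : Set ℕ} (hX : X.Infinite)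
    (T : Finset (Finset ℕ)) :
    ∃ C, C ⊆ X ∧ C.Infinite ∧ ∀ s ∈ T, Acc F c C s ∨ Rej F c C s := by
  classical
  induction T using Finset.induction_on with
  | empty => exact ⟨X, subset_rfl, hX, by simp⟩
  | insert s T hnot ih =>
    obtain ⟨C, hC, hCinf, hdec⟩ := ih
    obtain ⟨C', hC', hC'inf, hdec'⟩ := dec_exists F c hCinf s
    refine ⟨C', hC'.trans hC, hC'inf, ?_⟩
    intro u hu
    rcases Finset.mem_insert.mp hu with rfl | hu
    · exact hdec'
    · rcases hdec u hu with h | h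
      · exact Or.inl (acc_mono hC' h)
      · exact Or.inr (rej_mono hC' h)

lemma acc_of_mem {X : Set ℕ} {s : Finset ℕ} (hs : s ∈ F) (hcs : c s = 0) : Acc F c X s := by
  intro Z hZ hZX hgt
  refine ⟨s, hs, hcs, Set.subset_union_left, ?_⟩
  intro b hb hbs a ha
  rcases hb with hb | hb
  · exact absurd hb hbs
  · exact hgt a ha b hb

lemma iseg_comparable {t S : Finset ℕ} {Y : Set ℕ} (ht : ISeg t Y) (hS : ISeg S Y) :
    InitSeg t S ∨ InitSeg S t := by
  classical
  have hsub : t ⊆ S ∨ S ⊆ t := by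
    by_contra h
    push_neg at h
    obtain ⟨h1, h2⟩ := h
    obtain ⟨x, hxt, hxS⟩ := Finset.not_subset.mp h1
    obtain ⟨y, hyS, hyt⟩ := Finset.not_subset.mp h2
    have hxy : x < y := ht.2 y (hS.1 hyS) hyt x hxt
    have hyx : y < x := hS.2 x (ht.1 hxt) hxS y hyS
    omega
  rcases hsub with h | h
  · refine Or.inl ⟨S \ t, (Finset.union_sdiff_of_subset h).symm, ?_⟩
    intro a ha b hb
    have hb' := Finset.mem_sdiff.mp hb
    exact ht.2 b (hS.1 hb'.1) hb'.2 a ha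
  · refine Or.inr ⟨t \ S, (Finset.union_sdiff_of_subset h).symm, ?_⟩
    intro a ha b hb
    have hb' := Finset.mem_sdiff.mp hb
    exact hS.2 b (ht.1 hb'.1) hb'.2 a ha

/-- If `B` accepts `∅`, then every member of the thin family `F` inside `B` has colour 0. -/
lemma case_accept (hF : ThinFam F) {B : Set ℕ} (hB : B.Infinite) (hacc : Acc F c B (∅ : Finset ℕ)) :
    ∀ S ∈ F, (S : Set ℕ) ⊆ B → c S = 0 := by
  classical
  intro S hSF hSB
  set Z : Set ℕ := ↑S ∪ {x ∈ B | ∀ b ∈ S, b < x} with hZdef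
  have hZinf : Z.Infinite := by
    apply Set.Infinite.mono (Set.subset_union_right (s := (↑S : Set ℕ)))
    have h : {x ∈ B | ∀ b ∈ S, b < x} ⊇ {x ∈ B | S.sup id < x} := by
      rintro x ⟨hx1, hx2⟩
      exact ⟨hx1, fun b hb => lt_of_le_of_lt (Finset.le_sup (f := id) hb) hx2⟩
    exact Set.Infinite.mono h (inf_gt hB _)
  have hZB : Z ⊆ B := by
    rintro x (hx | hx)
    · exact hSB hx
    · exact hx.1
  obtain ⟨t, htF, htc, htseg⟩ := hacc Z hZinf hZB (by simp)
  rw [show ((↑(∅ : Finset ℕ) : Set ℕ) ∪ Z) = Z by simp] at htseg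
  have hSseg : ISeg S Z := by
    constructor
    · exact Set.subset_union_left
    · rintro b (hb | hb) hbS a ha
      · exact absurd hb hbS
      · exact hb.2 a ha
  rcases iseg_comparable htseg hSseg with h | h
  · rw [← hF t htF S hSF h]; exact htc
  · rw [hF S hSF t htF h]; exact htc

/-- Key lemma: if `D` rejects `s` and decides all extensions, then `D` rejects
`insert n s` for all large enough `n ∈ D`. -/
lemma key_reject {D : Set ℕ} {s : Finset ℕ} (hrej : Rej F c D s)
    (hdec : ∀ n ∈ D, (∀ b ∈ s, b < n) → Acc F c D (insert n s) ∨ Rej F c D (insert n s)) :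
    ∃ N, ∀ n ∈ D, N < n → Rej F c D (insert n s) := by
  classical
  set Y : Set ℕ := {n ∈ D | (∀ b ∈ s, b < n) ∧ Acc F c D (insert n s)} with hYdef
  have hYfin : Y.Finite := by
    by_contra hYnf
    have hYinf : Y.Infinite := hYnf
    have hYD : Y ⊆ D := fun x hx => hx.1
    apply hrej Y hYD hYinf
    -- show Y accepts s
    intro Z hZinf hZY hgt
    have hZne : Z.Nonempty := hZinf.nonempty
    set n := sInf Z with hn
    have hnZ : n ∈ Z := Nat.sInf_mem hZne
    have hnY : n ∈ Y := hZY hnZ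
    set Z' := Z \ {n} with hZ'
    have hZ'inf : Z'.Infinite := hZinf.diff (Set.finite_singleton n)
    have hZ'D : Z' ⊆ D := fun x hx => (hZY hx.1).1
    have hgt' : ∀ b ∈ insert n s, ∀ m ∈ Z', b < m := by
      intro b hb m hm
      rcases Finset.mem_insert.mp hb with rfl | hb
      · have h1 : n ≤ m := Nat.sInf_le hm.1
        have h2 : m ≠ n := by simpa using hm.2
        omega
      · exact hgt b hb m hm.1
    obtain ⟨t, htF, htc, htseg⟩ := hnY.2.2 Z' hZ'inf hZ'D hgt'
    refine ⟨t, htF, htc, ?_⟩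
    have heq : (↑(insert n s) : Set ℕ) ∪ Z' = ↑s ∪ Z := by
      ext x
      simp only [Finset.coe_insert, Set.mem_union, Set.mem_insert_iff, Finset.mem_coe,
        Set.mem_diff, Set.mem_singleton_iff, hZ']
      constructor
      · rintro ((rfl | h) | ⟨h, _⟩)
        · exact Or.inr hnZ
        · exact Or.inl h
        · exact Or.inr h
      · rintro (h | h)
        · exact Or.inl (Or.inr h)
        · by_cases hx : x = n
          · exact Or.inl (Or.inl hx)
          · exact Or.inr ⟨h, hx⟩
    rwa [heq] at htseg
  obtain ⟨N0, hN0⟩ := hYfin.bddAbove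
  refine ⟨max N0 (s.sup id), ?_⟩
  intro n hnD hn
  have hgt : ∀ b ∈ s, b < n := by
    intro b hb
    have := Finset.le_sup (f := id) hb
    simp only [id] at this
    omega
  rcases hdec n hnD hgt with hacc | hrej'
  · exfalso
    have : n ∈ Y := ⟨hnD, hgt, hacc⟩
    have := hN0 this
    omega
  · exact hrej'

section Fusion

variable (F) (c)
variable (A : Set ℕ)

/-- Invariant of the fusion construction. -/
def FInv (p : Set ℕ × Finset ℕ) : Prop :=
  p.1.Infinite ∧ p.1 ⊆ A ∧ ↑p.2 ⊆ A ∧ (∀ b ∈ p.2, ∀ x ∈ p.1, b < x) ∧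
  (∀ s ∈ p.2.powerset, s.Nonempty → Acc F c p.1 s ∨ Rej F c p.1 s)

/-- One step of the fusion construction. -/
def FRel (p q : Set ℕ × Finset ℕ) : Prop :=
  FInv F c A q ∧ q.1 ⊆ p.1 ∧ ∃ a ∈ p.1, q.2 = insert a p.2

lemma fstep_ex {p : Set ℕ × Finset ℕ} (h : FInv F c A p) : ∃ q, FRel F c A p q := by
  classical
  obtain ⟨hXinf, hXA, htA, hlt, hdec⟩ := h
  obtain ⟨a, ha⟩ := hXinf.nonempty
  have hX'inf : ({x ∈ p.1 | a < x}).Infinite := inf_gt hXinf a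
  obtain ⟨C, hC, hCinf, hCdec⟩ := multidec F c hX'inf (insert a p.2).powerset
  have hCX : C ⊆ p.1 := hC.trans (fun x hx => hx.1)
  refine ⟨(C, insert a p.2), ⟨hCinf, hCX.trans hXA, ?_, ?_, ?_⟩, hCX, a, ha, rfl⟩
  · intro x hx
    rcases Finset.mem_insert.mp (by exact_mod_cast hx) with rfl | hx'
    · exact hXA ha
    · exact htA hx'
  · intro b hb x hx
    rcases Finset.mem_insert.mp hb with rfl | hb'
    · exact (hC hx).2
    · exact hlt b hb' x (hCX hx)
  · intro s hs _
    exact hCdec s hs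

open Classical in
/-- The fusion step function. -/
noncomputable def fstep (p : Set ℕ × Finset ℕ) : Set ℕ × Finset ℕ :=
  if h : FInv F c A p then Classical.choose (fstep_ex F c A h) else p

lemma fstep_rel {p : Set ℕ × Finset ℕ} (h : FInv F c A p) : FRel F c A p (fstep F c A p) := by
  rw [fstep, dif_pos h]
  exact Classical.choose_spec (fstep_ex F c A h)

/-- The fusion sequence. -/
noncomputable def fseq (k : ℕ) : Set ℕ × Finset ℕ :=
  (fstep F c A)^[k] (A, ∅)

variable (hA : A.Infinite)

lemma fseq_zero : fseq F c A 0 = (A, ∅) := rfl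

lemma fseq_succ (k : ℕ) : fseq F c A (k + 1) = fstep F c A (fseq F c A k) :=
  Function.iterate_succ_apply' _ _ _

include hA in
lemma fseq_inv (k : ℕ) : FInv F c A (fseq F c A k) := by
  induction k with
  | zero =>
    refine ⟨hA, subset_rfl, by simp [fseq_zero], by simp [fseq_zero], ?_⟩
    intro s hs hsne
    simp only [fseq_zero, Finset.powerset_empty, Finset.mem_singleton] at hs
    subst hs
    exact absurd hsne (by simp)
  | succ k ih =>
    rw [fseq_succ]
    exact (fstep_rel F c A ih).1

include hA in
lemma fseq_rel (k : ℕ) : FRel F c A (fseq F c A k) (fseq F c A (k + 1)) := by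
  rw [fseq_succ]
  exact fstep_rel F c A (fseq_inv F c A hA k)

include hA in
lemma fseq_set_mono {j k : ℕ} (h : j ≤ k) : (fseq F c A k).1 ⊆ (fseq F c A j).1 := by
  induction k with
  | zero => simp_all
  | succ k ih =>
    rcases Nat.le_succ_iff_eq_or_le.mp h with rfl | h'
    · exact subset_rfl
    · exact ((fseq_rel F c A hA k).2.1).trans (ih h')

include hA in
lemma fseq_fin_mono {j k : ℕ} (h : j ≤ k) : (fseq F c A j).2 ⊆ (fseq F c A k).2 := by
  induction k with
  | zero => simp_all
  | succ k ih =>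
    rcases Nat.le_succ_iff_eq_or_le.mp h with rfl | h'
    · exact subset_rfl
    · obtain ⟨a, _, heq⟩ := (fseq_rel F c A hA k).2.2
      rw [heq]
      exact (ih h').trans (Finset.subset_insert _ _)

include hA in
lemma fseq_tail {k m : ℕ} (h : k ≤ m) :
    (↑(fseq F c A m).2 : Set ℕ) ⊆ ↑(fseq F c A k).2 ∪ (fseq F c A k).1 := by
  induction m with
  | zero =>
    have : k = 0 := Nat.le_zero.mp h
    subst this
    exact Set.subset_union_left
  | succ m ih =>
    rcases Nat.le_succ_iff_eq_or_le.mp h with rfl | h'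
    · exact Set.subset_union_left
    · obtain ⟨a, ha, heq⟩ := (fseq_rel F c A hA m).2.2
      rw [heq]
      intro x hx
      rcases Finset.mem_insert.mp (by exact_mod_cast hx) with rfl | hx'
      · exact Or.inr (fseq_set_mono F c A hA h' ha)
      · exact ih h' hx'

include hA in
lemma fseq_card (k : ℕ) : ((fseq F c A k).2).card = k := by
  induction k with
  | zero => simp [fseq_zero]
  | succ k ih =>
    obtain ⟨a, ha, heq⟩ := (fseq_rel F c A hA k).2.2
    have hanot : a ∉ (fseq F c A k).2 := by
      intro hmem
      have := (fseq_inv F c A hA k).2.2.2.1 a hmem a ha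
      omega
    rw [heq, Finset.card_insert_of_notMem hanot, ih]

/-- Finite subsets of an increasing union of finsets. -/
lemma finset_subset_iUnion {t : ℕ → Finset ℕ} (hmono : ∀ j k, j ≤ k → t j ⊆ t k)
    (s : Finset ℕ) (h : ↑s ⊆ ⋃ k, (↑(t k) : Set ℕ)) : ∃ k, s ⊆ t k := by
  classical
  induction s using Finset.induction_on with
  | empty => exact ⟨0, Finset.empty_subset _⟩
  | insert a s hnot ih =>
    have has : (↑(insert a s) : Set ℕ) = insert a ↑s := by simp
    rw [has] at h
    obtain ⟨k, hk⟩ := ih ((Set.subset_insert a ↑s).trans h)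
    have ha : a ∈ ⋃ k, (↑(t k) : Set ℕ) := h (Set.mem_insert a _)
    obtain ⟨j, hj⟩ := Set.mem_iUnion.mp ha
    refine ⟨max j k, ?_⟩
    intro x hx
    rcases Finset.mem_insert.mp hx with rfl | hx'
    · exact hmono j _ (le_max_left _ _) (by exact_mod_cast hj)
    · exact hmono k _ (le_max_right _ _) (hk hx')

lemma iUnion_infinite {t : ℕ → Finset ℕ} (hcard : ∀ k, (t k).card = k) :
    (⋃ k, (↑(t k) : Set ℕ)).Infinite := by
  intro hfin
  have hsub : ∀ k, t k ⊆ hfin.toFinset := by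
    intro k x hx
    rw [Set.Finite.mem_toFinset]
    exact Set.mem_iUnion.mpr ⟨k, hx⟩
  have := Finset.card_le_card (hsub (hfin.toFinset.card + 1))
  rw [hcard] at this
  omega

include hA in
/-- The fusion lemma: an infinite `D ⊆ A` deciding all its nonempty finite subsets. -/
lemma fusion : ∃ D, D ⊆ A ∧ D.Infinite ∧
    ∀ s : Finset ℕ, ↑s ⊆ D → s.Nonempty → Acc F c D s ∨ Rej F c D s := by
  classical
  set D : Set ℕ := ⋃ k, (↑(fseq F c A k).2 : Set ℕ) with hD
  have hDA : D ⊆ A := by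
    intro x hx
    obtain ⟨k, hk⟩ := Set.mem_iUnion.mp hx
    exact (fseq_inv F c A hA k).2.2.1 hk
  have hDinf : D.Infinite := iUnion_infinite (fseq_card F c A hA)
  refine ⟨D, hDA, hDinf, ?_⟩
  intro s hsD hsne
  have hex : ∃ k, s ⊆ (fseq F c A k).2 :=
    finset_subset_iUnion (fun j k h => fseq_fin_mono F c A hA h) s hsD
  have hk₀spec : s ⊆ (fseq F c A (Nat.find hex)).2 := Nat.find_spec hex
  have hk₀pos : Nat.find hex ≠ 0 := by
    intro h
    rw [h] at hk₀spec
    simp only [fseq_zero] at hk₀spec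
    obtain ⟨x, hx⟩ := hsne
    exact absurd (hk₀spec hx) (Finset.notMem_empty x)
  obtain ⟨m, hm⟩ : ∃ m, Nat.find hex = m + 1 := ⟨Nat.find hex - 1, by omega⟩
  rw [hm] at hk₀spec
  have hnotm : ¬ s ⊆ (fseq F c A m).2 := Nat.find_min hex (by omega)
  obtain ⟨a, ha, heq⟩ := (fseq_rel F c A hA m).2.2
  obtain ⟨b, hbs, hbm⟩ := Finset.not_subset.mp hnotm
  have hba : b = a := by
    have := hk₀spec hbs
    rw [heq] at this
    rcases Finset.mem_insert.mp this with h | h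
    · exact h
    · exact absurd h hbm
  subst hba
  -- every element of D above b lies in (fseq (m+1)).1
  have halpha : ∀ x ∈ D, b < x → x ∈ (fseq F c A (m + 1)).1 := by
    intro x hx hbx
    obtain ⟨j, hj⟩ := Set.mem_iUnion.mp hx
    have hj' : x ∈ (↑(fseq F c A (max (m + 1) j)).2 : Set ℕ) := by
      exact_mod_cast fseq_fin_mono F c A hA (le_max_right _ _) hj
    rcases fseq_tail F c A hA (le_max_left (m + 1) j) hj' with h | h
    · exfalso
      have hxmem : x ∈ (fseq F c A (m + 1)).2 := by exact_mod_cast h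
      rw [heq] at hxmem
      rcases Finset.mem_insert.mp hxmem with rfl | hxm
      · omega
      · have := (fseq_inv F c A hA m).2.2.2.1 x hxm b ha
        omega
    · exact h
  -- other than b are in (fseq m).2 hence < b
  have hsle : ∀ x ∈ s, x ≤ b := by
    intro x hx
    have := hk₀spec hx
    rw [heq] at this
    rcases Finset.mem_insert.mp this with rfl | hxm
    · exact le_rfl
    · exact le_of_lt ((fseq_inv F c A hA m).2.2.2.1 x hxm b ha)
  have hdec := (fseq_inv F c A hA (m + 1)).2.2.2.2 s (Finset.mem_powerset.mpr hk₀spec) hsne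
  rcases hdec with hacc | hrej
  · left
    intro Z hZinf hZD hgt
    have hZX : Z ⊆ (fseq F c A (m + 1)).1 := by
      intro x hx
      exact halpha x (hZD hx) (hgt b hbs x hx)
    exact hacc Z hZinf hZX hgt
  · right
    intro C hCD hCinf hCacc
    set C' := {x ∈ C | b < x} with hC'
    have hC'inf : C'.Infinite := inf_gt hCinf b
    have hC'X : C' ⊆ (fseq F c A (m + 1)).1 := by
      rintro x ⟨hx1, hx2⟩
      exact halpha x (hCD hx1) hx2
    exact hrej C' hC'X hC'inf (acc_mono (fun x hx => hx.1) hCacc)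

end Fusion

section BuildE

variable (F) (c)
variable (D : Set ℕ)

/-- Invariant of the second construction. -/
def EInv (t : Finset ℕ) : Prop :=
  ↑t ⊆ D ∧ ∀ s ∈ t.powerset, Rej F c D s

def ERel (t t' : Finset ℕ) : Prop :=
  EInv F c D t' ∧ ∃ a ∈ D, (∀ b ∈ t, b < a) ∧ t' = insert a t

variable (hD : D.Infinite)
  (hkey : ∀ s : Finset ℕ, ↑s ⊆ D → Rej F c D s →
    ∃ N, ∀ n ∈ D, N < n → Rej F c D (insert n s))

/-- Uniform bound over a finite family. -/
lemma unif_bound (T : Finset (Finset ℕ))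
    (h : ∀ s ∈ T, ∃ N, ∀ n ∈ D, N < n → Rej F c D (insert n s)) :
    ∃ N, ∀ s ∈ T, ∀ n ∈ D, N < n → Rej F c D (insert n s) := by
  classical
  induction T using Finset.induction_on with
  | empty => exact ⟨0, by simp⟩
  | insert s T hnot ih =>
    obtain ⟨N1, hN1⟩ := h s (Finset.mem_insert_self s T)
    obtain ⟨N2, hN2⟩ := ih (fun u hu => h u (Finset.mem_insert_of_mem hu))
    refine ⟨max N1 N2, ?_⟩
    intro u hu n hn hlt
    rcases Finset.mem_insert.mp hu with rfl | hu'
    · exact hN1 n hn (by omega)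
    · exact hN2 u hu' n hn (by omega)

include hD hkey in
lemma estep_ex {t : Finset ℕ} (h : EInv F c D t) : ∃ t', ERel F c D t t' := by
  classical
  obtain ⟨htD, hrej⟩ := h
  obtain ⟨N, hN⟩ := unif_bound F c D t.powerset
    (fun s hs => hkey s ((Finset.coe_subset.mpr (Finset.mem_powerset.mp hs)).trans htD)
      (hrej s hs))
  obtain ⟨a, ha⟩ := (inf_gt hD (max N (t.sup id))).nonempty
  obtain ⟨haD, haN⟩ := ha
  have hta : ∀ b ∈ t, b < a := by
    intro b hb
    have := Finset.le_sup (f := id) hb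
    simp only [id] at this
    omega
  refine ⟨insert a t, ⟨?_, ?_⟩, a, haD, hta, rfl⟩
  · intro x hx
    rcases Finset.mem_insert.mp (by exact_mod_cast hx) with rfl | hx'
    · exact haD
    · exact htD hx'
  · intro s hs
    have hs' := Finset.mem_powerset.mp hs
    by_cases has : a ∈ s
    · have herase : s.erase a ⊆ t := by
        intro x hx
        have hx1 := Finset.mem_erase.mp hx
        rcases Finset.mem_insert.mp (hs' hx1.2) with h | h
        · exact absurd h hx1.1
        · exact h
      have := hN (s.erase a) (Finset.mem_powerset.mpr herase) a haD (by omega)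
      rwa [Finset.insert_erase has] at this
    · have : s ⊆ t := by
        intro x hx
        rcases Finset.mem_insert.mp (hs' hx) with rfl | h
        · exact absurd hx has
        · exact h
      exact hrej s (Finset.mem_powerset.mpr this)

open Classical in
noncomputable def estep (t : Finset ℕ) : Finset ℕ :=
  if h : EInv F c D t then Classical.choose (estep_ex F c D hD hkey h) else t

include hD hkey in
lemma estep_rel {t : Finset ℕ} (h : EInv F c D t) : ERel F c D t (estep F c D hD hkey t) := by
  rw [estep, dif_pos h]
  exact Classical.choose_spec (estep_ex F c D hD hkey h)

noncomputable def eseq (k : ℕ) : Finset ℕ :=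
  (estep F c D hD hkey)^[k] ∅

variable (hrej0 : Rej F c D (∅ : Finset ℕ))

include hrej0 in
lemma eseq_inv (k : ℕ) : EInv F c D (eseq F c D hD hkey k) := by
  induction k with
  | zero =>
    refine ⟨by simp [eseq], ?_⟩
    intro s hs
    simp only [eseq, Function.iterate_zero, id_eq, Finset.powerset_empty,
      Finset.mem_singleton] at hs
    subst hs
    exact hrej0
  | succ k ih =>
    have : eseq F c D hD hkey (k + 1) = estep F c D hD hkey (eseq F c D hD hkey k) :=
      Function.iterate_succ_apply' _ _ _
    rw [this]
    exact (estep_rel F c D hD hkey ih).1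

include hrej0 in
lemma eseq_rel (k : ℕ) : ERel F c D (eseq F c D hD hkey k) (eseq F c D hD hkey (k + 1)) := by
  have : eseq F c D hD hkey (k + 1) = estep F c D hD hkey (eseq F c D hD hkey k) :=
    Function.iterate_succ_apply' _ _ _
  rw [this]
  exact estep_rel F c D hD hkey (eseq_inv F c D hD hkey hrej0 k)

include hrej0 in
lemma eseq_mono {j k : ℕ} (h : j ≤ k) : eseq F c D hD hkey j ⊆ eseq F c D hD hkey k := by
  induction k with
  | zero => simp_all
  | succ k ih =>
    rcases Nat.le_succ_iff_eq_or_le.mp h with rfl | h'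
    · exact subset_rfl
    · obtain ⟨a, _, _, heq⟩ := (eseq_rel F c D hD hkey hrej0 k).2
      rw [heq]
      exact (ih h').trans (Finset.subset_insert _ _)

include hrej0 in
lemma eseq_card (k : ℕ) : (eseq F c D hD hkey k).card = k := by
  induction k with
  | zero => simp [eseq]
  | succ k ih =>
    obtain ⟨a, _, hlt, heq⟩ := (eseq_rel F c D hD hkey hrej0 k).2
    have hanot : a ∉ eseq F c D hD hkey k := by
      intro hmem
      have := hlt a hmem
      omega
    rw [heq, Finset.card_insert_of_notMem hanot, ih]

include hD hkey hrej0 in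
lemma buildE : ∃ E, E ⊆ D ∧ E.Infinite ∧ ∀ s : Finset ℕ, ↑s ⊆ E → Rej F c D s := by
  classical
  set E : Set ℕ := ⋃ k, (↑(eseq F c D hD hkey k) : Set ℕ) with hE
  have hED : E ⊆ D := by
    intro x hx
    obtain ⟨k, hk⟩ := Set.mem_iUnion.mp hx
    exact (eseq_inv F c D hD hkey hrej0 k).1 hk
  have hEinf : E.Infinite := iUnion_infinite (eseq_card F c D hD hkey hrej0)
  refine ⟨E, hED, hEinf, ?_⟩
  intro s hsE
  obtain ⟨k, hk⟩ := finset_subset_iUnion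
    (fun j k h => eseq_mono F c D hD hkey hrej0 h) s hsE
  exact (eseq_inv F c D hD hkey hrej0 k).2 s (Finset.mem_powerset.mpr hk)

end BuildE

end NWaux

open NWaux in
/-- Nash-Williams partition theorem (2 colours). -/
theorem nash_williams_two (A : Set ℕ) (hA : A.Infinite) (F : Set (Finset ℕ))
    (hF : ThinFam F) (c : Finset ℕ → Fin 2) :
    ∃ i : Fin 2, ∃ A' ⊆ A, A'.Infinite ∧
      ∀ S ∈ F, (S : Set ℕ) ⊆ A' → c S = i := by
  classical
  by_cases h : ∃ B, B ⊆ A ∧ B.Infinite ∧ Acc F c B (∅ : Finset ℕ)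
  · obtain ⟨B, hBA, hBinf, hBacc⟩ := h
    exact ⟨0, B, hBA, hBinf, case_accept hF hBinf hBacc⟩
  · have hrejA : Rej F c A (∅ : Finset ℕ) := by
      intro C hC hCinf hacc
      exact h ⟨C, hC, hCinf, hacc⟩
    obtain ⟨D, hDA, hDinf, hDdec⟩ := fusion F c A hA
    have hrejD : Rej F c D (∅ : Finset ℕ) := rej_mono hDA hrejA
    have hkey : ∀ s : Finset ℕ, ↑s ⊆ D → Rej F c D s →
        ∃ N, ∀ n ∈ D, N < n → Rej F c D (insert n s) := by
      intro s hsD hrejs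
      apply key_reject hrejs
      intro n hnD _
      apply hDdec
      · intro x hx
        rcases Finset.mem_insert.mp (by exact_mod_cast hx) with rfl | hxs
        · exact hnD
        · exact hsD hxs
      · exact Finset.insert_nonempty _ _
    obtain ⟨E, hED, hEinf, hErej⟩ := buildE F c D hDinf hkey hrejD
    refine ⟨1, E, hED.trans hDA, hEinf, ?_⟩
    intro S hSF hSE
    by_contra hc1
    have hc0 : c S = 0 := by
      rcases Fin.exists_fin_two.mp ⟨c S, rfl⟩ with h | h
      · exact h
      · exact absurd h hc1
    exact hErej S hSE D subset_rfl hDinf (acc_of_mem hSF hc0)
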